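/- Let (Ω, μ) be a probability space, 0 < q < p < ∞, and suppose g is a positive measurable function with ‖g‖_{r,∞} = 1 where 1/r = 1/q - 1/p, and f₁, …, fₙ are nonnegative measurable functions with ‖f_j/g‖_{p,∞} ≤ C for all j. Then for all scalars c₁, …, cₙ, ‖sup_j |c_j f_j|‖_{q,∞} ≤ C' (Σ_j |c_j|^p)^{1/p}, where C' depends only on C, p, q, r. -/

import Mathlib

open MeasureTheory ENNReal Filter

/-- The weak-`L_s` quasi-norm `‖f‖_{s,∞} = sup_{t>0} t · μ({|f| > t})^{1/s}`. -/
noncomputable def weakNorm {Ω : Type*} [MeasurableSpace Ω] (μ : Measure Ω) (s : ℝ)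
    (f : Ω → ℝ) : ℝ≥0∞ :=
  ⨆ (t : ℝ) (_ : 0 < t), ENNReal.ofReal t * μ {ω | t < |f ω|} ^ (1 / s)

lemma nikishin_distrib_bound {Ω : Type} [MeasurableSpace Ω] (μ : Measure Ω) {s : ℝ} (hs : 0 < s)
    {f : Ω → ℝ} {B : ℝ≥0∞} (h : weakNorm μ s f ≤ B) {t : ℝ} (ht : 0 < t) :
    μ {ω | t < |f ω|} ≤ (B / ENNReal.ofReal t) ^ s := by
  have h1 : ENNReal.ofReal t * μ {ω | t < |f ω|} ^ (1/s) ≤ B :=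
    le_trans (le_iSup₂ (f := fun t (_ : 0 < t) =>
      ENNReal.ofReal t * μ {ω | t < |f ω|} ^ (1/s)) t ht) h
  have h2 : μ {ω | t < |f ω|} ^ (1/s) ≤ B / ENNReal.ofReal t := by
    rw [ENNReal.le_div_iff_mul_le (Or.inl (by simp [ht])) (Or.inl ofReal_ne_top), mul_comm]
    exact h1
  calc μ {ω | t < |f ω|} = (μ {ω | t < |f ω|} ^ (1/s)) ^ s := by
        rw [← ENNReal.rpow_mul, one_div_mul_cancel hs.ne', ENNReal.rpow_one]
    _ ≤ _ := ENNReal.rpow_le_rpow h2 hs.le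

lemma nikishin_fin_sup_le {n : ℕ} {x : Fin n → ℝ} {b : ℝ} (hb : 0 ≤ b) (h : ∀ j, x j ≤ b) :
    (⨆ j, x j) ≤ b := by
  cases n with
  | zero => rw [iSup_of_empty', Real.sSup_empty]; exact hb
  | succ m => exact ciSup_le h

lemma nikishin_fin_lt_sup {n : ℕ} {x : Fin n → ℝ} {t : ℝ} (ht : 0 < t) (h : t < ⨆ j, x j) :
    ∃ j, t < x j := by
  cases n with
  | zero => rw [iSup_of_empty', Real.sSup_empty] at h; linarith
  | succ m => exact exists_lt_of_lt_ciSup h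

lemma nikishin_fin_sup_abs_nonneg {n : ℕ} (x : Fin n → ℝ) :
    0 ≤ ⨆ j, |x j| := by
  cases n with
  | zero => rw [iSup_of_empty', Real.sSup_empty]
  | succ m =>
    exact le_trans (abs_nonneg (x 0))
      (le_ciSup (f := fun j => |x j|) (Set.Finite.bddAbove (Set.finite_range _)) 0)

lemma nikishin_key_calc {p q r t C A : ℝ} (hp : 0 < p) (hr : 0 < r) (ht : 0 < t)
    (hC : 0 < C) (hA : 0 < A) (hpr : q * (p + r) = p * r) :
    (1 / ((t/(C*A)) ^ (p/(p+r)))) ^ r = (C*A/t) ^ q ∧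
    ((C * ((t/(C*A)) ^ (p/(p+r))) / t) ^ p) * A ^ p = (C*A/t) ^ q := by
  have hpr0 : 0 < p + r := by linarith
  set u : ℝ := C*A/t with hu_def
  have hu : 0 < u := by positivity
  set a : ℝ := p/(p+r) with ha_def
  have htCA : t/(C*A) = u⁻¹ := by rw [hu_def, inv_div]
  have har : a * r = q := by
    rw [ha_def, div_mul_eq_mul_div, div_eq_iff hpr0.ne']; linarith [hpr]
  have hap : (1 - a) * p = q := by
    have : 1 - a = r / (p + r) := by
      rw [ha_def, eq_div_iff hpr0.ne', sub_mul, div_mul_cancel₀ _ hpr0.ne']; ring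
    rw [this]
    field_simp
    nlinarith [hpr]
  have hlam : (t/(C*A)) ^ a = (u ^ a)⁻¹ := by
    rw [htCA, Real.inv_rpow hu.le]
  constructor
  · rw [hlam, one_div, inv_inv, ← Real.rpow_mul hu.le, har]
  · have h1 : C * ((t/(C*A)) ^ a) / t * A = u * (u ^ a)⁻¹ := by
      rw [htCA, Real.inv_rpow hu.le, hu_def]; field_simp
    rw [← Real.mul_rpow (by positivity) hA.le, h1,
      show u * (u ^ a)⁻¹ = u ^ (1 - a) by
        rw [sub_eq_add_neg, Real.rpow_add hu, Real.rpow_one, Real.rpow_neg hu.le],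
      ← Real.rpow_mul hu.le, hap]

set_option maxHeartbeats 1000000 in
theorem nikishin_N1_implies_N2 (q p r C : ℝ) (hq : 0 < q) (hqp : q < p)
    (hr : 1 / r = 1 / q - 1 / p) (hC : 0 < C) :
    ∃ C' : ℝ, 0 < C' ∧
      ∀ (Ω : Type) (_ : MeasurableSpace Ω) (μ : Measure Ω), IsProbabilityMeasure μ →
        ∀ g : Ω → ℝ, Measurable g → (∀ ω, 0 < g ω) → weakNorm μ r g = 1 →
        ∀ (n : ℕ) (f : Fin n → Ω → ℝ), (∀ j, Measurable (f j)) → (∀ j ω, 0 ≤ f j ω) →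
          (∀ j, weakNorm μ p (fun ω => f j ω / g ω) ≤ ENNReal.ofReal C) →
        ∀ c : Fin n → ℝ,
          weakNorm μ q (fun ω => ⨆ j, |c j * f j ω|) ≤
            ENNReal.ofReal (C' * (∑ j, |c j| ^ p) ^ (1 / p)) := by
  have hp : 0 < p := lt_trans hq hqp
  have hr1 : 0 < 1 / r := by
    rw [hr, sub_pos]
    exact one_div_lt_one_div_of_lt hq hqp
  have hr0 : 0 < r := by
    rcases lt_trichotomy r 0 with h | h | h
    · have : 1 / r < 0 := one_div_neg.mpr h
      linarith
    · rw [h] at hr1; norm_num at hr1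
    · exact h
  have hpr : q * (p + r) = p * r := by
    have h := hr
    field_simp at h
    nlinarith [h]
  refine ⟨2 ^ (1/q) * C, by positivity, ?_⟩
  intro Ω _ μ hμ g hgm hgpos hgnorm n f hfm hfnn hfC c
  by_cases hA0 : ∑ j, |c j| ^ p = 0
  · -- all coefficients vanish
    have hc : ∀ j, c j = 0 := by
      intro j
      have h1 : ∀ j ∈ Finset.univ, (0:ℝ) ≤ |c j| ^ p := fun j _ => by positivity
      have h2 := (Finset.sum_eq_zero_iff_of_nonneg h1).mp hA0 j (Finset.mem_univ j)
      have h3 := (Real.rpow_eq_zero_iff_of_nonneg (abs_nonneg _)).mp h2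
      simpa using h3.1
    refine le_trans (iSup₂_le fun t ht => ?_) zero_le
    beta_reduce
    have hempty : {ω | t < abs (⨆ j, |c j * f j ω|)} = ∅ := by
      apply Set.eq_empty_iff_forall_notMem.mpr
      intro ω hω
      simp only [Set.mem_setOf_eq] at hω
      have hs : (⨆ j, |c j * f j ω|) = 0 :=
        le_antisymm (nikishin_fin_sup_le le_rfl (fun j => by simp [hc j]))
          (nikishin_fin_sup_abs_nonneg _)
      rw [hs, abs_zero] at hω
      linarith
    rw [hempty, measure_empty, ENNReal.zero_rpow_of_pos (by positivity), mul_zero]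
  · -- main case
    have hsum : 0 < ∑ j, |c j| ^ p :=
      lt_of_le_of_ne (Finset.sum_nonneg fun j _ => by positivity) (Ne.symm hA0)
    set A : ℝ := (∑ j, |c j| ^ p) ^ (1/p) with hA_def
    have hA : 0 < A := Real.rpow_pos_of_pos hsum _
    have hApow : A ^ p = ∑ j, |c j| ^ p := by
      rw [hA_def, ← Real.rpow_mul hsum.le, one_div_mul_cancel hp.ne', Real.rpow_one]
    apply iSup₂_le
    intro t ht
    beta_reduce
    set lam : ℝ := (t/(C*A)) ^ (p/(p+r)) with hlam_def
    have hlam : 0 < lam := Real.rpow_pos_of_pos (by positivity) _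
    obtain ⟨hkey1, hkey2⟩ := nikishin_key_calc hp hr0 ht hC hA hpr
    -- the exceptional sets
    set Sg : Set Ω := {ω | lam < |g ω|} with hSg_def
    set S : Fin n → Set Ω := fun j => {ω | t < |c j| * f j ω ∧ g ω ≤ lam} with hS_def
    have hsub : {ω | t < abs (⨆ j, |c j * f j ω|)} ⊆ Sg ∪ ⋃ j, S j := by
      intro ω hω
      simp only [Set.mem_setOf_eq] at hω
      rw [abs_of_nonneg (nikishin_fin_sup_abs_nonneg _)] at hω
      obtain ⟨j, hj⟩ := nikishin_fin_lt_sup ht hω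
      rw [abs_mul, abs_of_nonneg (hfnn j ω)] at hj
      by_cases hgl : g ω ≤ lam
      · exact Or.inr (Set.mem_iUnion.mpr ⟨j, hj, hgl⟩)
      · exact Or.inl (lt_of_lt_of_le (not_le.mp hgl) (le_abs_self _))
    -- measure of the g-set
    have hSg : μ Sg ≤ ENNReal.ofReal ((1 / lam) ^ r) := by
      have h1 := nikishin_distrib_bound μ hr0 hgnorm.le hlam
      calc μ Sg ≤ (1 / ENNReal.ofReal lam) ^ r := h1
        _ = ENNReal.ofReal ((1 / lam) ^ r) := by
            rw [one_div, ← ENNReal.ofReal_inv_of_pos hlam,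
              ENNReal.ofReal_rpow_of_pos (inv_pos.mpr hlam), one_div]
    -- measures of the S j
    have hSj : ∀ j, μ (S j) ≤ ENNReal.ofReal ((C * lam / t) ^ p * |c j| ^ p) := by
      intro j
      by_cases hcj : c j = 0
      · have : S j = ∅ := by
          apply Set.eq_empty_iff_forall_notMem.mpr
          intro ω hω
          have := hω.1
          rw [hcj, abs_zero, zero_mul] at this
          linarith
        rw [this, measure_empty]
        exact zero_le
      · have hcabs : 0 < |c j| := abs_pos.mpr hcj
        set s : ℝ := t / (|c j| * lam) with hs_def
        have hs : 0 < s := by positivity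
        have hsub2 : S j ⊆ {ω | s < |(fun ω => f j ω / g ω) ω|} := by
          intro ω ⟨h1, h2⟩
          have hg := hgpos ω
          have hf := hfnn j ω
          simp only [Set.mem_setOf_eq]
          rw [abs_of_nonneg (div_nonneg hf hg.le)]
          have ht' : t / |c j| < f j ω := (div_lt_iff₀ hcabs).mpr (by linarith [h1, mul_comm (|c j|) (f j ω)])
          have h3 : s < f j ω / lam := by
            rw [hs_def, ← div_div]
            gcongr
          have h4 : f j ω / lam ≤ f j ω / g ω := by gcongr
          linarith
        calc μ (S j) ≤ μ {ω | s < |(fun ω => f j ω / g ω) ω|} := measure_mono hsub2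
          _ ≤ (ENNReal.ofReal C / ENNReal.ofReal s) ^ p :=
              nikishin_distrib_bound μ hp (hfC j) hs
          _ = ENNReal.ofReal ((C / s) ^ p) := by
              rw [← ENNReal.ofReal_div_of_pos hs, ENNReal.ofReal_rpow_of_pos (by positivity)]
          _ = ENNReal.ofReal ((C * lam / t) ^ p * |c j| ^ p) := by
              congr 1
              rw [← Real.mul_rpow (by positivity) (abs_nonneg _)]
              congr 1
              rw [hs_def]
              field_simp
    -- combine
    have hmeas : μ {ω | t < abs (⨆ j, |c j * f j ω|)} ≤ ENNReal.ofReal (2 * (C*A/t) ^ q) := by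
      calc μ {ω | t < abs (⨆ j, |c j * f j ω|)}
          ≤ μ (Sg ∪ ⋃ j, S j) := measure_mono hsub
        _ ≤ μ Sg + μ (⋃ j, S j) := measure_union_le _ _
        _ ≤ μ Sg + ∑ j, μ (S j) :=
            add_le_add le_rfl (measure_iUnion_fintype_le μ S)
        _ ≤ ENNReal.ofReal ((1 / lam) ^ r) + ∑ j, ENNReal.ofReal ((C * lam / t) ^ p * |c j| ^ p) :=
            add_le_add hSg (Finset.sum_le_sum fun j _ => hSj j)
        _ = ENNReal.ofReal ((1 / lam) ^ r + (C * lam / t) ^ p * A ^ p) := by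
            rw [← ENNReal.ofReal_sum_of_nonneg (fun j _ => by positivity),
              ← Finset.mul_sum, ← hApow, ← ENNReal.ofReal_add (by positivity) (by positivity)]
        _ = ENNReal.ofReal (2 * (C*A/t) ^ q) := by
            rw [hkey1, hkey2, two_mul]
    calc ENNReal.ofReal t * μ {ω | t < abs (⨆ j, |c j * f j ω|)} ^ (1/q)
        ≤ ENNReal.ofReal t * (ENNReal.ofReal (2 * (C*A/t) ^ q)) ^ (1/q) :=
          mul_le_mul_right (ENNReal.rpow_le_rpow hmeas (by positivity)) _
      _ = ENNReal.ofReal (t * (2 * (C*A/t) ^ q) ^ (1/q)) := by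
          rw [ENNReal.ofReal_rpow_of_pos (by positivity), ← ENNReal.ofReal_mul ht.le]
      _ = ENNReal.ofReal (2 ^ (1/q) * C * A) := by
          congr 1
          rw [Real.mul_rpow (by norm_num) (by positivity), ← Real.rpow_mul (by positivity),
            mul_one_div_cancel hq.ne', Real.rpow_one]
          field_simp
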